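/- Let (p̲^A_i, p̄^A_i)_{i=1}^n be a coherent probability interval on E_A = {a_1,…,a_n} (possibly not good), and let (p̲^A_i, q̄^A_i)_{i=1}^n be a good coherent probability interval with the same lower bounds and with q̄^A_i ≥ p̄^A_i for all i (a fixing of the original interval). Let m_A be the standard good mass associated to (p̲^A, q̄^A), and, for a fixed j, let p̲^i_j ≤ p̄^i_j in [0,1] be given for each i. Then p̲^B_j := Σ_{V ⊆ E_A} m_A(V) ∏_{i : a_i ∈ V} p̲^i_j ≤ min Σ_{i=1}^n y_i x_i and p̄^B_j := 1 − Σ_{V ⊆ E_A} m_A(V) ∏_{i : a_i ∈ V} (1 − p̄^i_j) ≥ max Σ_{i=1}^n y_i x_i, where the minimum and maximum are over all x_i ∈ [p̲^A_i, p̄^A_i] with Σ_i x_i = 1 and all y_i ∈ [p̲^i_j, p̄^i_j]. -/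
import Mathlib


open Finset

/-- A Dempster–Shafer mass function on the finite type `α`:
nonnegative, at most one, vanishing on `∅`, and summing to one. -/
def IsMass {α : Type*} [Fintype α] [DecidableEq α] (m : Finset α → ℝ) : Prop :=
  m ∅ = 0 ∧ (∀ V : Finset α, 0 ≤ m V ∧ m V ≤ 1) ∧ (∑ V : Finset α, m V) = 1

/-- The belief function associated to a mass function: `Bel m W = ∑_{V ⊆ W} m V`. -/
def Bel {α : Type*} [Fintype α] [DecidableEq α] (m : Finset α → ℝ) (W : Finset α) : ℝ :=
  ∑ V ∈ Finset.univ.filter (fun V : Finset α => V ⊆ W), m V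

/-- The plausibility function associated to a mass function:
`Pl m W = ∑_{V ∩ W ≠ ∅} m V`. -/
def Pl {α : Type*} [Fintype α] [DecidableEq α] (m : Finset α → ℝ) (W : Finset α) : ℝ :=
  ∑ V ∈ Finset.univ.filter (fun V : Finset α => (V ∩ W).Nonempty), m V

/-- A coherent probability interval `(lo i, hi i)_{i}` on `Fin n`:
componentwise bounds `0 ≤ lo ≤ hi ≤ 1`, together with [Coh1], [Coh2], [Coh3]. -/
def IsCoherent {n : ℕ} (lo hi : Fin n → ℝ) : Prop :=
  (∀ i, 0 ≤ lo i ∧ lo i ≤ hi i ∧ hi i ≤ 1) ∧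
  (∑ i, lo i) ≤ 1 ∧ 1 ≤ (∑ i, hi i) ∧
  (∀ i, 1 - ∑ h ∈ Finset.univ.erase i, hi h ≤ lo i) ∧
  (∀ i, hi i ≤ 1 - ∑ h ∈ Finset.univ.erase i, lo h)

/-- `Δ = S̄ + (n-2)S̲ - (n-1)` for a probability interval. -/
def intervalDelta {n : ℕ} (lo hi : Fin n → ℝ) : ℝ :=
  (∑ i, hi i) + ((n : ℝ) - 2) * (∑ i, lo i) - ((n : ℝ) - 1)

/-- A *good* coherent probability interval: coherent and `Δ ≥ 0`. -/
def IsGood {n : ℕ} (lo hi : Fin n → ℝ) : Prop :=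
  IsCoherent lo hi ∧ 0 ≤ intervalDelta lo hi

/-- The standard good mass (SGM) associated to a (good coherent) probability interval:
mass `lo i` on each singleton `{a_i}`, mass `1 - hi i - ∑_{h ≠ i} lo h` on each
complement `univ ∖ {a_i}`, mass `Δ` on `univ`, and `0` on every other set. -/
def SGM {n : ℕ} (lo hi : Fin n → ℝ) (V : Finset (Fin n)) : ℝ :=
  (∑ i ∈ Finset.univ.filter (fun i : Fin n => V = {i}), lo i)
  + (∑ i ∈ Finset.univ.filter (fun i : Fin n => V = Finset.univ \ {i}),
      (1 - hi i - ∑ h ∈ Finset.univ.erase i, lo h))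
  + (if V = Finset.univ then intervalDelta lo hi else 0)

/-- Let `(loA, hiA)` be a coherent probability interval on
`E_A = Fin n` (possibly not good), and let `(loA, qA)` be a good coherent fixing
of it (same lower bounds, `qA i ≥ hiA i`), with standard good mass
`mA = SGM loA qA`. For fixed `j` and conditional bounds `lo i ≤ hi i` in `[0,1]`,
`p̲ᴮⱼ = ∑_V mA(V) ∏_{i ∈ V} lo i` is below, and
`p̄ᴮⱼ = 1 - ∑_V mA(V) ∏_{i ∈ V} (1 - hi i)` is above, `∑ᵢ yᵢ xᵢ` for every
`xᵢ ∈ [loA i, hiA i]` with `∑ᵢ xᵢ = 1` and every `yᵢ ∈ [lo i, hi i]`. -/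
lemma sgm_expand {n : ℕ} (lo hi f : Fin n → ℝ) :
    ∑ V : Finset (Fin n), SGM lo hi V * ∏ i ∈ V, f i
    = (∑ i, lo i * f i)
      + (∑ i, (1 - hi i - ∑ h ∈ Finset.univ.erase i, lo h) * ∏ h ∈ Finset.univ.erase i, f h)
      + intervalDelta lo hi * ∏ h, f h := by
  simp only [SGM, add_mul, Finset.sum_add_distrib, Finset.sum_filter, Finset.sum_mul]
  rw [Finset.sum_comm (γ := Finset (Fin n))
    (f := fun V i => (if V = {i} then lo i else 0) * ∏ x ∈ V, f x)]
  rw [Finset.sum_comm (γ := Finset (Fin n))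
    (f := fun V i => (if V = Finset.univ \ {i} then
      (1 - hi i - ∑ h ∈ Finset.univ.erase i, lo h) else 0) * ∏ x ∈ V, f x)]
  simp [ite_mul, Finset.sum_ite_eq, Finset.sdiff_singleton_eq_erase]

lemma lemA {n : ℕ} [NeZero n] (f t c : Fin n → ℝ) (D : ℝ)
    (hf : ∀ i, 0 ≤ f i ∧ f i ≤ 1) (ht : ∀ i, 0 ≤ t i) (hc : ∀ i, 0 ≤ c i) (hD : 0 ≤ D)
    (hsum : (∑ i, c i) + D = ∑ i, t i)
    (hct : ∀ i, c i + t i ≤ ∑ i, t i) :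
    (∑ i, c i * ∏ h ∈ Finset.univ.erase i, f h) + D * ∏ h, f h ≤ ∑ i, t i * f i := by
  obtain ⟨μ, -, hμ⟩ := Finset.exists_min_image Finset.univ f ⟨0, mem_univ 0⟩
  simp only [mem_univ, forall_const] at hμ
  set T : ℝ := ∑ i, t i with hT
  have hprod_le : ∀ (s : Finset (Fin n)) (a : Fin n), a ∈ s → ∏ h ∈ s, f h ≤ f a := by
    intro s a ha
    rw [← Finset.mul_prod_erase s f ha]
    have h1 : ∏ h ∈ s.erase a, f h ≤ 1 :=
      Finset.prod_le_one (fun i _ => (hf i).1) (fun i _ => (hf i).2)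
    nlinarith [Finset.prod_nonneg (fun i (_ : i ∈ s.erase a) => (hf i).1), (hf a).1]
  have hPμ : ∏ h, f h ≤ f μ := hprod_le _ μ (mem_univ μ)
  have hPi : ∀ i, i ≠ μ → ∏ h ∈ Finset.univ.erase i, f h ≤ f μ := fun i hi =>
    hprod_le _ μ (Finset.mem_erase.2 ⟨Ne.symm hi, mem_univ μ⟩)
  rcases Finset.eq_empty_or_nonempty (Finset.univ.erase μ) with he | he
  · have huniv : (Finset.univ : Finset (Fin n)) = {μ} := by
      rcases (Finset.erase_eq_empty_iff _ _).1 he with h | h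
      · exact absurd h univ_nonempty.ne_empty
      · exact h
    have h1 : ∑ i, c i = c μ := by rw [huniv, Finset.sum_singleton]
    have h2 : T = t μ := by rw [hT, huniv, Finset.sum_singleton]
    have h3 : c μ ≤ 0 := by have := hct μ; linarith
    have hc0 : c μ = 0 := le_antisymm h3 (hc μ)
    have hD' : D = t μ := by rw [h1, hc0] at hsum; linarith
    rw [huniv]
    simp only [Finset.sum_singleton, Finset.prod_singleton]
    rw [hc0, hD']
    have h4 : Finset.erase {μ} μ = (∅ : Finset (Fin n)) := by simp
    rw [h4]
    simp
  · obtain ⟨σ, hσmem, hσ⟩ := Finset.exists_min_image _ f he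
    have hμσ : f μ ≤ f σ := hμ σ
    have hPμσ : ∏ h ∈ Finset.univ.erase μ, f h ≤ f σ := hprod_le _ σ hσmem
    have hLs : ∑ i, c i * ∏ h ∈ Finset.univ.erase i, f h
        ≤ c μ * f σ + (∑ i ∈ Finset.univ.erase μ, c i) * f μ := by
      rw [← Finset.add_sum_erase _ _ (mem_univ μ), Finset.sum_mul]
      refine add_le_add (mul_le_mul_of_nonneg_left hPμσ (hc μ)) (Finset.sum_le_sum ?_)
      intro i hi
      exact mul_le_mul_of_nonneg_left (hPi i (Finset.mem_erase.1 hi).1) (hc i)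
    have hRs : t μ * f μ + (∑ i ∈ Finset.univ.erase μ, t i) * f σ ≤ ∑ i, t i * f i := by
      rw [← Finset.add_sum_erase _ _ (mem_univ μ), Finset.sum_mul]
      refine add_le_add le_rfl (Finset.sum_le_sum ?_)
      intro i hi
      exact mul_le_mul_of_nonneg_left (hσ i hi) (ht i)
    have hCsplit : c μ + (∑ i ∈ Finset.univ.erase μ, c i) = ∑ i, c i :=
      Finset.add_sum_erase _ _ (mem_univ μ)
    have hTsplit : t μ + (∑ i ∈ Finset.univ.erase μ, t i) = T :=
      Finset.add_sum_erase _ _ (mem_univ μ)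
    have hDP : D * ∏ h, f h ≤ D * f μ := mul_le_mul_of_nonneg_left hPμ hD
    have key : (f σ - f μ) * (T - t μ - c μ) ≥ 0 :=
      mul_nonneg (by linarith) (by have := hct μ; linarith)
    have hC' : (∑ i ∈ Finset.univ.erase μ, c i) = T - D - c μ := by linarith
    have hT' : (∑ i ∈ Finset.univ.erase μ, t i) = T - t μ := by linarith
    have mid : c μ * f σ + (∑ i ∈ Finset.univ.erase μ, c i) * f μ + D * f μ
        ≤ t μ * f μ + (∑ i ∈ Finset.univ.erase μ, t i) * f σ := by
      rw [hC', hT']; nlinarith [key]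
    linarith [hLs, hRs, hDP, mid]

lemma key_lower {n : ℕ} (loA hiA qA : Fin n → ℝ)
    (hA : IsCoherent loA hiA) (hq : IsGood loA qA) (hfix : ∀ i, hiA i ≤ qA i)
    (f g : Fin n → ℝ) (hf : ∀ i, 0 ≤ f i ∧ f i ≤ 1) (hfg : ∀ i, f i ≤ g i)
    (x : Fin n → ℝ) (hx : ∀ i, loA i ≤ x i ∧ x i ≤ hiA i) (hxs : (∑ i, x i) = 1) :
    (∑ V : Finset (Fin n), SGM loA qA V * ∏ i ∈ V, f i) ≤ ∑ i, g i * x i := by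
  have hn : n ≠ 0 := by rintro rfl; simp at hxs
  haveI : NeZero n := ⟨hn⟩
  rw [sgm_expand]
  have herase : ∀ i : Fin n, (∑ h ∈ Finset.univ.erase i, loA h) = (∑ h, loA h) - loA i :=
    fun i => Finset.sum_erase_eq_sub (mem_univ i)
  have hc : ∀ i, 0 ≤ 1 - qA i - ∑ h ∈ Finset.univ.erase i, loA h := by
    intro i
    have := hq.1.2.2.2.2 i
    linarith
  have ht : ∀ i, 0 ≤ x i - loA i := fun i => by linarith [(hx i).1]
  have hsum : (∑ i, (1 - qA i - ∑ h ∈ Finset.univ.erase i, loA h)) + intervalDelta loA qA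
      = ∑ i, (x i - loA i) := by
    have h1 : (∑ i, (1 - qA i - ∑ h ∈ Finset.univ.erase i, loA h))
        = (n : ℝ) - (∑ i, qA i) - ((n : ℝ) * (∑ h, loA h) - (∑ i, loA i)) := by
      simp only [herase, Finset.sum_sub_distrib, Finset.sum_const, Finset.card_univ,
        Fintype.card_fin, nsmul_eq_mul, mul_one]
      try ring
    have h2 : (∑ i, (x i - loA i)) = 1 - ∑ i, loA i := by
      rw [Finset.sum_sub_distrib, hxs]
    rw [h1, h2, intervalDelta]
    ring
  have hct : ∀ i, (1 - qA i - ∑ h ∈ Finset.univ.erase i, loA h) + (x i - loA i)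
      ≤ ∑ i, (x i - loA i) := by
    intro i
    have h2 : (∑ i, (x i - loA i)) = 1 - ∑ i, loA i := by
      rw [Finset.sum_sub_distrib, hxs]
    have h3 : x i ≤ qA i := le_trans (hx i).2 (hfix i)
    rw [h2, herase i]
    linarith
  have main := lemA f (fun i => x i - loA i) (fun i => 1 - qA i - ∑ h ∈ Finset.univ.erase i, loA h)
    (intervalDelta loA qA) hf ht hc hq.2 hsum hct
  have hxf : (∑ i, loA i * f i) + ∑ i, (x i - loA i) * f i = ∑ i, x i * f i := by
    rw [← Finset.sum_add_distrib]
    congr 1; ext i; ring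
  have hfinal : (∑ i, x i * f i) ≤ ∑ i, g i * x i := by
    refine Finset.sum_le_sum ?_
    intro i _
    have hx0 : 0 ≤ x i := le_trans (hA.1 i).1 (hx i).1
    calc x i * f i = f i * x i := by ring
      _ ≤ g i * x i := mul_le_mul_of_nonneg_right (hfg i) hx0
  linarith [main, hxf, hfinal]

theorem fixed_sgm_bounds_credal (n : ℕ) (loA hiA qA : Fin n → ℝ)
    (hA : IsCoherent loA hiA) (hq : IsGood loA qA) (hfix : ∀ i, hiA i ≤ qA i)
    (lo hi : Fin n → ℝ) (hbd : ∀ i, 0 ≤ lo i ∧ lo i ≤ hi i ∧ hi i ≤ 1)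
    (x : Fin n → ℝ) (hx : ∀ i, loA i ≤ x i ∧ x i ≤ hiA i) (hxs : (∑ i, x i) = 1)
    (y : Fin n → ℝ) (hy : ∀ i, lo i ≤ y i ∧ y i ≤ hi i) :
    (∑ V : Finset (Fin n), SGM loA qA V * ∏ i ∈ V, lo i) ≤ ∑ i, y i * x i ∧
    ∑ i, y i * x i ≤ 1 - ∑ V : Finset (Fin n), SGM loA qA V * ∏ i ∈ V, (1 - hi i) := by
  constructor
  · exact key_lower loA hiA qA hA hq hfix lo y
      (fun i => ⟨(hbd i).1, le_trans (hbd i).2.1 (hbd i).2.2⟩) (fun i => (hy i).1) x hx hxs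
  · have H := key_lower loA hiA qA hA hq hfix (fun i => 1 - hi i) (fun i => 1 - y i)
      (fun i => ⟨show (0:ℝ) ≤ 1 - hi i by linarith [(hbd i).2.2],
        show (1:ℝ) - hi i ≤ 1 by linarith [(hbd i).1, (hbd i).2.1]⟩)
      (fun i => show (1:ℝ) - hi i ≤ 1 - y i by linarith [(hy i).2]) x hx hxs
    have h2 : (∑ i, (1 - y i) * x i) = 1 - ∑ i, y i * x i := by
      have : ∀ i, (1 - y i) * x i = x i - y i * x i := fun i => by ring
      simp only [this, Finset.sum_sub_distrib, hxs]
    rw [h2] at H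
    linarith
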